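/- Let (R, m, k) be a local ring, x ∈ m \ m^2 an R-regular element, and N a finitely generated R-module with xN = 0 and N ≅ m/(x) (i.e., N is the maximal ideal of R/(x) pulled back). Then there is a split exact sequence 0 → k → m/xm → m/(x) → 0; in particular m/xm ≅ k ⊕ m/(x) as R/(x)-modules. -/

import Mathlib

open IsLocalRing

/-- Let `(R, m, k)` be a Noetherian local ring and `x ∈ m \ m²` an `R`-regular element.
Then there is a split exact sequence `0 → k → m/xm → m/(x) → 0`, where `m/xm → m/(x)` is the
natural surjection; in particular `m/xm ≅ k ⊕ m/(x)` as modules. -/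
theorem split_exact_sequence_of_regular_element {R : Type*} [CommRing R] [IsNoetherianRing R]
    [IsLocalRing R] (x : R) (hx : x ∈ maximalIdeal R) (hx2 : x ∉ maximalIdeal R ^ 2)
    (hreg : x ∈ nonZeroDivisors R) :
    ∃ π : ((↥(maximalIdeal R)) ⧸ (Ideal.span {x} • ⊤ : Submodule R ↥(maximalIdeal R))) →ₗ[R]
        ((↥(maximalIdeal R)) ⧸
          Submodule.comap (maximalIdeal R).subtype (Ideal.span {x} : Submodule R R)),
      (∀ y : ↥(maximalIdeal R), π (Submodule.Quotient.mk y) = Submodule.Quotient.mk y) ∧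
      Function.Surjective π ∧
      ∃ (f : ResidueField R →ₗ[R]
            ((↥(maximalIdeal R)) ⧸ (Ideal.span {x} • ⊤ : Submodule R ↥(maximalIdeal R))))
        (g : ((↥(maximalIdeal R)) ⧸
            (Ideal.span {x} • ⊤ : Submodule R ↥(maximalIdeal R))) →ₗ[R] ResidueField R),
        g.comp f = LinearMap.id ∧ LinearMap.range f = LinearMap.ker π ∧
        Nonempty ((((↥(maximalIdeal R)) ⧸
            (Ideal.span {x} • ⊤ : Submodule R ↥(maximalIdeal R)))) ≃ₗ[R]
          (ResidueField R × ((↥(maximalIdeal R)) ⧸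
            Submodule.comap (maximalIdeal R).subtype (Ideal.span {x} : Submodule R R)))) := by
  set m : Ideal R := maximalIdeal R with hm
  set M := ↥m
  set A : Submodule R M := (Ideal.span {x} • ⊤ : Submodule R M) with hA
  set B : Submodule R M := Submodule.comap m.subtype (Ideal.span {x} : Submodule R R) with hB
  set ξ : M := ⟨x, hx⟩ with hξ
  have hAB : A ≤ Submodule.comap LinearMap.id B := by
    rw [Submodule.comap_id]
    refine Submodule.smul_le.2 fun r hr n _ => ?_
    simp only [hB, Submodule.mem_comap, Submodule.coe_smul, Submodule.subtype_apply]
    exact Ideal.mul_mem_right _ _ hr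
  refine ⟨Submodule.mapQ A B LinearMap.id hAB, fun y => Submodule.mapQ_apply (p := A) (q := B) LinearMap.id y, ?_, ?_⟩
  · intro n
    obtain ⟨y, rfl⟩ := Submodule.Quotient.mk_surjective _ n
    exact ⟨Submodule.Quotient.mk y, Submodule.mapQ_apply (p := A) (q := B) LinearMap.id y⟩
  -- construct f
  have hfker : m ≤ LinearMap.ker (A.mkQ ∘ₗ LinearMap.toSpanSingleton R M ξ) := by
    intro r hr
    simp only [LinearMap.mem_ker, LinearMap.comp_apply, LinearMap.toSpanSingleton_apply,
      Submodule.mkQ_apply, Submodule.Quotient.mk_eq_zero]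
    have : r • ξ = x • (⟨r, hr⟩ : M) := by
      ext; exact mul_comm r x
    rw [this]
    exact Submodule.smul_mem_smul (Ideal.mem_span_singleton_self x) trivial
  set f : ResidueField R →ₗ[R] (M ⧸ A) :=
    Submodule.liftQ m (A.mkQ ∘ₗ LinearMap.toSpanSingleton R M ξ) hfker with hf
  -- construct g
  have hA2 : A ≤ LinearMap.ker m.toCotangent := by
    intro y hy
    rw [LinearMap.mem_ker, Ideal.toCotangent_eq_zero]
    have h1 : Submodule.map m.subtype A ≤ m ^ 2 := by
      rw [hA, Submodule.map_smul'', Submodule.map_top, Submodule.range_subtype, pow_two,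
        smul_eq_mul]
      exact Ideal.mul_mono (Ideal.span_le.2 (Set.singleton_subset_iff.2 hx)) le_rfl
    exact h1 (Submodule.mem_map_of_mem hy)
  set τ : (M ⧸ A) →ₗ[R] (maximalIdeal R).Cotangent := Submodule.liftQ A m.toCotangent hA2 with hτ
  set u : (maximalIdeal R).Cotangent := m.toCotangent ξ with hu
  have hu0 : u ≠ 0 := fun h => hx2 ((Ideal.toCotangent_eq_zero m ξ).1 h)
  obtain ⟨q, hq⟩ := Submodule.exists_isCompl (ResidueField R ∙ u)
  set proj := Submodule.linearProjOfIsCompl _ q hq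
  set lk : CotangentSpace R →ₗ[ResidueField R] ResidueField R :=
    (LinearEquiv.coord (ResidueField R) (CotangentSpace R) u hu0).toLinearMap ∘ₗ proj with hlk
  have hlku : lk u = 1 := by
    have h1 : proj u = ⟨u, Submodule.mem_span_singleton_self u⟩ :=
      Submodule.linearProjOfIsCompl_apply_left hq ⟨u, Submodule.mem_span_singleton_self u⟩
    rw [hlk, LinearMap.comp_apply, h1]
    exact LinearEquiv.coord_self (ResidueField R) (CotangentSpace R) u hu0
  set g : (M ⧸ A) →ₗ[R] ResidueField R := (lk.restrictScalars R) ∘ₗ τ with hg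
  have hgf : g.comp f = LinearMap.id := by
    refine LinearMap.ext fun c => ?_
    obtain ⟨r, rfl⟩ := Submodule.Quotient.mk_surjective m c
    have h1 : f (Submodule.Quotient.mk r) = A.mkQ (r • ξ) := Submodule.liftQ_apply _ _ r
    have h2 : τ (A.mkQ (r • ξ)) = m.toCotangent (r • ξ) := Submodule.liftQ_apply _ _ _
    show g (f (Submodule.Quotient.mk r)) = Submodule.Quotient.mk r
    rw [h1, hg, LinearMap.comp_apply, h2, map_smul,
      LinearMap.coe_restrictScalars, ← hu, LinearMap.map_smul_of_tower, hlku]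
    show r • (Submodule.Quotient.mk (1 : R) : R ⧸ m) = Submodule.Quotient.mk r
    rw [← Submodule.Quotient.mk_smul, smul_eq_mul, mul_one]
  have hBspan : B = Submodule.span R {ξ} := by
    ext b
    rw [hB, Submodule.mem_comap, Submodule.subtype_apply, Ideal.mem_span_singleton,
      Submodule.mem_span_singleton]
    constructor
    · rintro ⟨c, hc⟩
      exact ⟨c, by ext; show c * x = (b : R); rw [hc, mul_comm]⟩
    · rintro ⟨c, rfl⟩
      exact ⟨c, mul_comm c x⟩
  set π : (M ⧸ A) →ₗ[R] (M ⧸ B) := Submodule.mapQ A B LinearMap.id hAB with hπ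
  have hrange : LinearMap.range f = LinearMap.ker π := by
    rw [hf, hπ]
    erw [Submodule.range_liftQ]
    rw [Submodule.mapQ, Submodule.ker_liftQ]
    have h1 : LinearMap.ker (B.mkQ ∘ₗ LinearMap.id) = B := by
      rw [LinearMap.comp_id, Submodule.ker_mkQ]
    rw [h1, LinearMap.range_comp, ← LinearMap.span_singleton_eq_range, ← hBspan]
  have hgf' : ∀ c, g (f c) = c := fun c => DFunLike.congr_fun hgf c
  have hπsurj : Function.Surjective π := by
    intro n
    obtain ⟨y, rfl⟩ := Submodule.Quotient.mk_surjective _ n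
    exact ⟨Submodule.Quotient.mk y, Submodule.mapQ_apply (p := A) (q := B) LinearMap.id y⟩
  have hbij : Function.Bijective (LinearMap.prod g π) := by
    constructor
    · intro y z hyz
      rw [← sub_eq_zero]
      have h1 : g (y - z) = 0 ∧ π (y - z) = 0 := by
        have := Prod.ext_iff.1 hyz
        constructor <;> simp only [map_sub] <;>
          simp only [LinearMap.prod_apply, Pi.prod] at this <;>
          [exact sub_eq_zero.2 this.1; exact sub_eq_zero.2 this.2]
      obtain ⟨c, hc⟩ : y - z ∈ LinearMap.range f := hrange ▸ LinearMap.mem_ker.2 h1.2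
      have : c = 0 := by rw [← hgf' c, hc, h1.1]
      rw [← hc, this, map_zero]
    · rintro ⟨c, n⟩
      obtain ⟨y0, hy0⟩ := hπsurj n
      refine ⟨y0 + f (c - g y0), ?_⟩
      have hπf : π (f (c - g y0)) = 0 :=
        LinearMap.mem_ker.1 (hrange ▸ LinearMap.mem_range_self f (c - g y0))
      simp only [LinearMap.prod_apply, Function.prod, map_add, hgf' (c - g y0), hπf, hy0]
      refine Prod.ext ?_ ?_
      · show g y0 + (c - g y0) = c
        ring
      · show n + 0 = n
        rw [add_zero]
  exact ⟨f, g, hgf, hrange, ⟨LinearEquiv.ofBijective (LinearMap.prod g π) hbij⟩⟩
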